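/- arXiv:1311.6698 — 6 statements merged into one kernel-verified Lean document; each statement's English description precedes it below -/
import Mathlib

section
/- Let X be a complex Banach space, D ⊆ B, and let h : D → X be ω-pseudo-contractive for some ω ∈ ℝ. Then D is dense in B if and only if for every x ∈ B one has lim_{α→0⁺} Φ_α(x) = x in the norm topology of X. -/
open Filter Topology Metric Set

noncomputable section

/-- `J(x) = {x* ∈ X* : ⟨x, x*⟩ = ‖x‖² = ‖x*‖²}`. -/
def Jset {X : Type*} [NormedAddCommGroup X] [NormedSpace ℂ X] (x : X) :
    Set (X →L[ℂ] ℂ) :=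
  {f | f x = ((‖x‖ ^ 2 : ℝ) : ℂ) ∧ ‖f‖ ^ 2 = ‖x‖ ^ 2}

/-- `Φ` is the Abel average `Φ_α = (I − αh)⁻¹ ∘ ((1 − αω)I)` of `h : D → X`:
for every `x` in the unit ball `B`, `Φ x` is the unique `y ∈ D` with
`y − α h(y) = (1 − αω) x`. -/
def IsAbelAvg {X : Type*} [NormedAddCommGroup X] [NormedSpace ℂ X]
    (D : Set X) (h : X → X) (ω α : ℝ) (Φ : X → X) : Prop :=
  ∀ x ∈ ball (0 : X) 1,
    Φ x ∈ D ∧ Φ x - (α : ℂ) • h (Φ x) = (((1 - α * ω : ℝ) : ℂ)) • x ∧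
      ∀ y ∈ D, y - (α : ℂ) • h y = (((1 - α * ω : ℝ) : ℂ)) • x → y = Φ x

/-- `h : D → X` is `ω`-pseudo-contractive: for some `δ > 0` and every `α ∈ (0, δ)`
the Abel average `Φ_α` is well defined on all of `B` and lies in `Hol(B, D)`. -/
def PseudoContr {X : Type*} [NormedAddCommGroup X] [NormedSpace ℂ X]
    (D : Set X) (h : X → X) (ω : ℝ) : Prop :=
  ∃ δ > 0, ∀ α ∈ Set.Ioo (0 : ℝ) δ,
    ∃ Φ : X → X, IsAbelAvg D h ω α Φ ∧ DifferentiableOn ℂ Φ (ball (0 : X) 1)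

/-- `h : D → X` is `ω`-dissipative. -/
def OmegaDissip {X : Type*} [NormedAddCommGroup X] [NormedSpace ℂ X]
    (D : Set X) (h : X → X) (ω : ℝ) : Prop :=
  ∃ ε > 0, ∃ ς : ℝ, ∀ x ∈ D, 1 - ε < ‖x‖ → ‖x‖ < 1 →
    ∀ f ∈ Jset x, (f (h x)).re ≤ ω * ‖x‖ ^ 2 + ς * (1 - ‖x‖ ^ 2)

/-- `h` is closed in the weak topology on `D`. -/
def WeaklyClosedOn {X : Type*} [NormedAddCommGroup X] [NormedSpace ℂ X]
    (D : Set X) (h : X → X) : Prop :=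
  ∀ (u : ℕ → X) (x y : X), (∀ n, u n ∈ D) → x ∈ D →
    Tendsto u atTop (nhds x) →
    (∀ f : X →L[ℂ] ℂ, Tendsto (fun n => f (h (u n))) atTop (nhds (f y))) →
    h x = y

/-- `X` is weakly sequentially complete. -/
def WeaklySeqComplete (X : Type*) [NormedAddCommGroup X] [NormedSpace ℂ X] : Prop :=
  ∀ u : ℕ → X, (∀ f : X →L[ℂ] ℂ, ∃ c : ℂ, Tendsto (fun n => f (u n)) atTop (nhds c)) →
    ∃ y : X, ∀ f : X →L[ℂ] ℂ, Tendsto (fun n => f (u n)) atTop (nhds (f y))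

/-- `h` has unit radius of boundedness. -/
def UnitRadiusBdd {X : Type*} [NormedAddCommGroup X] (h : X → X) : Prop :=
  ∀ r ∈ Set.Ioo (0 : ℝ) 1, ∃ M : ℝ, ∀ x : X, ‖x‖ ≤ r → ‖h x‖ ≤ M

/-- The numerical radius `L(h) = limsup_{s→1⁻} sup Re N(h_s)` (valued in `EReal`). -/
def numRad {X : Type*} [NormedAddCommGroup X] [NormedSpace ℂ X] (h : X → X) : EReal :=
  Filter.limsup
    (fun s : ℝ =>
      sSup {r : EReal | ∃ (x : X) (f : X →L[ℂ] ℂ), ‖x‖ = 1 ∧ f ∈ Jset x ∧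
        r = ((f (h ((s : ℂ) • x))).re : EReal)})
    (nhdsWithin (1 : ℝ) (Set.Ioo 0 1))

/-- `Q_ω = [0, 1/ω)` for `ω > 0`, `Q_0 = [0, ∞)`, `Q_ω = (−∞, 1/ω) ∪ [0, ∞)` for `ω < 0`. -/
def Qset (ω : ℝ) : Set ℝ :=
  if 0 < ω then Set.Ico 0 (1 / ω)
  else if ω < 0 then Set.Iio (1 / ω) ∪ Set.Ici 0
  else Set.Ici 0


/-- Schwarz-type uniform Lipschitz estimate for a holomorphic self-map of the unit ball
on a smaller closed ball. -/
lemma lip_aux {X : Type*} [NormedAddCommGroup X] [NormedSpace ℂ X] (f : X → X)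
    (hd : DifferentiableOn ℂ f (ball (0 : X) 1))
    (hm : ∀ z ∈ ball (0 : X) 1, f z ∈ ball (0 : X) 1)
    {r : ℝ} (hr1 : r < 1) {p q : X} (hp : ‖p‖ ≤ r) (hq : ‖q‖ ≤ r) :
    ‖f p - f q‖ ≤ (2 / (1 - r)) * ‖p - q‖ := by
  have hsub : closedBall (0 : X) r ⊆ ball (0 : X) 1 := by
    intro z hz
    rw [mem_closedBall_zero_iff] at hz
    rw [mem_ball_zero_iff]
    exact lt_of_le_of_lt hz hr1
  have hdiff : ∀ z ∈ closedBall (0 : X) r, DifferentiableAt ℂ f z := fun z hz =>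
    hd.differentiableAt (isOpen_ball.mem_nhds (hsub hz))
  have hbound : ∀ z ∈ closedBall (0 : X) r, ‖fderiv ℂ f z‖ ≤ 2 / (1 - r) := by
    intro z hz
    rw [mem_closedBall_zero_iff] at hz
    have h1r : (0 : ℝ) < 1 - r := by
      have := norm_nonneg z
      linarith
    refine ContinuousLinearMap.opNorm_le_bound _ (by positivity) fun v => ?_
    rcases eq_or_ne v 0 with rfl | hv
    · simp
    have hv' : (0 : ℝ) < ‖v‖ := norm_pos_iff.mpr hv
    set R : ℝ := (1 - r) / ‖v‖ with hR
    have hR0 : 0 < R := by positivity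
    set g : ℂ → X := fun w => f (z + w • v) with hg
    have hmem : ∀ w : ℂ, w ∈ ball (0 : ℂ) R → z + w • v ∈ ball (0 : X) 1 := by
      intro w hw
      rw [mem_ball_zero_iff] at hw ⊢
      calc ‖z + w • v‖ ≤ ‖z‖ + ‖w • v‖ := norm_add_le _ _
        _ = ‖z‖ + ‖w‖ * ‖v‖ := by rw [norm_smul]
        _ < r + R * ‖v‖ := by
            have : ‖w‖ * ‖v‖ < R * ‖v‖ := mul_lt_mul_of_pos_right hw hv'
            linarith
        _ = 1 := by rw [hR, div_mul_cancel₀ _ hv'.ne']; ring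
    have hld : Differentiable ℂ (fun w : ℂ => z + w • v) :=
      (differentiable_id.smul_const v).const_add z
    have hgd : DifferentiableOn ℂ g (ball (0 : ℂ) R) :=
      hd.comp hld.differentiableOn hmem
    have hgm : MapsTo g (ball (0 : ℂ) R) (ball (g 0) 2) := by
      intro w hw
      have h1 : g w ∈ ball (0 : X) 1 := hm _ (hmem w hw)
      have h2 : g 0 ∈ ball (0 : X) 1 := hm _ (hmem 0 (mem_ball_self hR0))
      rw [mem_ball_zero_iff] at h1 h2
      rw [mem_ball, dist_eq_norm]
      calc ‖g w - g 0‖ ≤ ‖g w‖ + ‖g 0‖ := norm_sub_le _ _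
        _ < 2 := by linarith
    have hderiv : HasDerivAt g ((fderiv ℂ f z) v) 0 := by
      have hl : HasDerivAt (fun w : ℂ => z + w • v) v 0 := by
        simpa using ((hasDerivAt_id (0 : ℂ)).smul_const v).const_add z
      have hf : HasFDerivAt f (fderiv ℂ f z) (z + (0 : ℂ) • v) := by
        simpa using (hdiff z (by simpa [mem_closedBall_zero_iff] using hz)).hasFDerivAt
      exact hf.comp_hasDerivAt 0 hl
    have := Complex.norm_deriv_le_div_of_mapsTo_ball hgd (hgm.mono_right ball_subset_closedBall) hR0
    rw [hderiv.deriv] at this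
    calc ‖(fderiv ℂ f z) v‖ ≤ 2 / R := this
      _ = 2 / (1 - r) * ‖v‖ := by rw [hR]; field_simp
  have hconv : Convex ℝ (closedBall (0 : X) r) := convex_closedBall _ _
  have := hconv.norm_image_sub_le_of_norm_fderiv_le hdiff hbound
    (mem_closedBall_zero_iff.mpr hq) (mem_closedBall_zero_iff.mpr hp)
  simpa using this

theorem stmt4' {X : Type*} [NormedAddCommGroup X] [NormedSpace ℂ X] [CompleteSpace X]
    (D : Set X) (hDB : D ⊆ ball (0 : X) 1) (h : X → X) (ω : ℝ)
    (δ : ℝ) (hδ : 0 < δ) (Φ : ℝ → X → X)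
    (hΦ : ∀ α ∈ Set.Ioo (0 : ℝ) δ,
      (∀ x ∈ ball (0 : X) 1,
        Φ α x ∈ D ∧ Φ α x - (α : ℂ) • h (Φ α x) = (((1 - α * ω : ℝ) : ℂ)) • x ∧
          ∀ y ∈ D, y - (α : ℂ) • h y = (((1 - α * ω : ℝ) : ℂ)) • x → y = Φ α x) ∧
        DifferentiableOn ℂ (Φ α) (ball (0 : X) 1)) :
    ball (0 : X) 1 ⊆ closure D ↔
      ∀ x ∈ ball (0 : X) 1,
        Tendsto (fun α : ℝ => Φ α x) (nhdsWithin 0 (Set.Ioi 0)) (nhds x) := by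
  constructor
  · intro hdense x hx
    have hx1 : ‖x‖ < 1 := mem_ball_zero_iff.mp hx
    have hρ0 : (0 : ℝ) ≤ ‖x‖ := norm_nonneg x
    set r : ℝ := (1 + ‖x‖) / 2 with hrdef
    have hρr : ‖x‖ < r := by rw [hrdef]; linarith
    have hr1 : r < 1 := by rw [hrdef]; linarith
    have h1r : (0 : ℝ) < 1 - r := by linarith
    set L : ℝ := 2 / (1 - r) with hLdef
    have hL0 : 0 < L := by positivity
    rw [Metric.tendsto_nhds]
    intro ε hε
    set η : ℝ := min (ε / (2 * L + 2)) ((r - ‖x‖) / 2) with hηdef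
    have hη0 : 0 < η := lt_min (by positivity) (by linarith)
    have hη1 : (2 * L + 2) * η ≤ ε := by
      have h1 : η ≤ ε / (2 * L + 2) := min_le_left _ _
      have h2 : (0 : ℝ) < 2 * L + 2 := by linarith
      calc (2 * L + 2) * η ≤ (2 * L + 2) * (ε / (2 * L + 2)) :=
            mul_le_mul_of_nonneg_left h1 h2.le
        _ = ε := by field_simp
    have hη2 : 2 * η ≤ r - ‖x‖ := by
      have := min_le_right (ε / (2 * L + 2)) ((r - ‖x‖) / 2)
      rw [← hηdef] at this; linarith
    obtain ⟨y, hyD, hxy⟩ := Metric.mem_closure_iff.mp (hdense hx) η hη0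
    have hxy' : ‖x - y‖ < η := by rwa [dist_eq_norm] at hxy
    set c : ℝ := ‖(ω : ℂ) • y - h y‖ with hcdef
    have hc0 : 0 ≤ c := norm_nonneg _
    have E1 : ∀ᶠ α in nhdsWithin (0 : ℝ) (Set.Ioi 0), α ∈ Set.Ioo (0 : ℝ) δ :=
      Ioo_mem_nhdsGT_of_mem ⟨le_refl 0, hδ⟩
    have E2 : ∀ᶠ α in nhdsWithin (0 : ℝ) (Set.Ioi 0), 2 * α * c < η := by
      have ht : Tendsto (fun α : ℝ => 2 * α * c) (nhdsWithin 0 (Set.Ioi 0)) (nhds 0) := by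
        have : Tendsto (fun α : ℝ => 2 * α * c) (nhds 0) (nhds (2 * 0 * c)) := by
          exact (continuous_const.mul continuous_id |>.mul continuous_const).tendsto 0
        simpa using this.mono_left nhdsWithin_le_nhds
      exact ht.eventually_lt_const hη0
    have E3 : ∀ᶠ α in nhdsWithin (0 : ℝ) (Set.Ioi 0), α * |ω| < 1 / 2 := by
      have ht : Tendsto (fun α : ℝ => α * |ω|) (nhdsWithin 0 (Set.Ioi 0)) (nhds 0) := by
        have : Tendsto (fun α : ℝ => α * |ω|) (nhds 0) (nhds (0 * |ω|)) := by
          exact (continuous_id.mul continuous_const).tendsto 0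
        simpa using this.mono_left nhdsWithin_le_nhds
      exact ht.eventually_lt_const (by norm_num)
    filter_upwards [E1, E2, E3] with α hα1 hα2 hα3
    obtain ⟨hΦ1, hΦ2⟩ := hΦ α hα1
    have hα0 : 0 < α := hα1.1
    set a : ℂ := ((1 - α * ω : ℝ) : ℂ) with hadef
    have hana : ‖a‖ = |1 - α * ω| := by rw [hadef, Complex.norm_real, Real.norm_eq_abs]
    have hαω : |α * ω| < 1 / 2 := by
      rwa [abs_mul, abs_of_pos hα0]
    have ha2 : (1 : ℝ) / 2 ≤ ‖a‖ := by
      rw [hana]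
      have := abs_sub_abs_le_abs_sub (1 : ℝ) (α * ω)
      rw [abs_one] at this
      linarith
    have ha0 : a ≠ 0 := by
      intro hz
      rw [hz, norm_zero] at ha2; linarith
    set xα : X := a⁻¹ • (y - (α : ℂ) • h y) with hxαdef
    have hkey : y - (α : ℂ) • h y = a • xα := (smul_inv_smul₀ ha0 _).symm
    have hacast : a = 1 - (α : ℂ) * (ω : ℂ) := by rw [hadef]; push_cast; ring
    have hdiffeq : xα - y = (a⁻¹ * (α : ℂ)) • ((ω : ℂ) • y - h y) := by
      rw [hxαdef, hacast]
      have h0 : (1 : ℂ) - (α : ℂ) * (ω : ℂ) ≠ 0 := by rwa [hacast] at ha0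
      match_scalars
      · field_simp; ring
      · field_simp
    have hnd : ‖xα - y‖ < η := by
      have hαn : ‖(α : ℂ)‖ = α := by
        rw [Complex.norm_real, Real.norm_eq_abs, abs_of_pos hα0]
      rw [hdiffeq, norm_smul, norm_mul, norm_inv, hαn]
      have hinv : ‖a‖⁻¹ ≤ 2 := by
        rw [inv_le_comm₀ (by linarith) (by norm_num)]
        linarith
      calc ‖a‖⁻¹ * α * c ≤ 2 * α * c := by
            apply mul_le_mul_of_nonneg_right _ hc0
            exact mul_le_mul_of_nonneg_right hinv hα0.le
        _ < η := hα2
    have hyn : ‖y‖ ≤ ‖x‖ + ‖x - y‖ := by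
      calc ‖y‖ = ‖x - (x - y)‖ := by rw [sub_sub_cancel]
        _ ≤ ‖x‖ + ‖x - y‖ := norm_sub_le _ _
    have hxα_r : ‖xα‖ ≤ r := by
      calc ‖xα‖ = ‖y + (xα - y)‖ := by rw [add_sub_cancel]
        _ ≤ ‖y‖ + ‖xα - y‖ := norm_add_le _ _
        _ ≤ r := by linarith
    have hxα_B : xα ∈ ball (0 : X) 1 := mem_ball_zero_iff.mpr (lt_of_le_of_lt hxα_r hr1)
    obtain ⟨-, -, huniq⟩ := hΦ1 xα hxα_B
    have hyΦ : y = Φ α xα := huniq y hyD hkey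
    have hmaps : ∀ z ∈ ball (0 : X) 1, Φ α z ∈ ball (0 : X) 1 := fun z hz =>
      hDB (hΦ1 z hz).1
    have hlip := lip_aux (Φ α) hΦ2 hmaps hr1 hρr.le hxα_r
    have h2' : ‖x - xα‖ ≤ ‖x - y‖ + ‖xα - y‖ := by
      calc ‖x - xα‖ = ‖(x - y) - (xα - y)‖ := by rw [sub_sub_sub_cancel_right]
        _ ≤ ‖x - y‖ + ‖xα - y‖ := norm_sub_le _ _
    have h3 : ‖x - xα‖ ≤ 2 * η := by linarith
    have h4 : L * ‖x - xα‖ ≤ L * (2 * η) := mul_le_mul_of_nonneg_left h3 hL0.le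
    rw [dist_eq_norm]
    have h5 : ‖Φ α x - x‖ ≤ ‖Φ α x - Φ α xα‖ + ‖y - x‖ := by
      calc ‖Φ α x - x‖ = ‖(Φ α x - Φ α xα) + (y - x)‖ := by
            rw [← hyΦ]; congr 1; abel
        _ ≤ ‖Φ α x - Φ α xα‖ + ‖y - x‖ := norm_add_le _ _
    have h6 : ‖y - x‖ < η := by rwa [norm_sub_rev]
    rw [← hLdef] at hlip
    linarith
  · intro hconv x hx
    refine mem_closure_of_tendsto (hconv x hx) ?_
    filter_upwards [Ioo_mem_nhdsGT_of_mem ⟨le_refl 0, hδ⟩] with α hα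
    exact ((hΦ α hα).1 x hx).1

/-- Lemma `D1lm`: for `h : D → X` `ω`-pseudo-contractive with Abel
averages `Φ_α`, `α ∈ (0, δ)`, the set `D` is dense in `B` iff `Φ_α(x) → x` as `α → 0⁺`
in the norm topology, for every `x ∈ B`. -/
theorem stmt4 {X : Type*} [NormedAddCommGroup X] [NormedSpace ℂ X] [CompleteSpace X]
    (D : Set X) (hDB : D ⊆ ball (0 : X) 1) (h : X → X) (ω : ℝ)
    (δ : ℝ) (hδ : 0 < δ) (Φ : ℝ → X → X)
    (hΦ : ∀ α ∈ Set.Ioo (0 : ℝ) δ,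
      IsAbelAvg D h ω α (Φ α) ∧ DifferentiableOn ℂ (Φ α) (ball (0 : X) 1)) :
    ball (0 : X) 1 ⊆ closure D ↔
      ∀ x ∈ ball (0 : X) 1,
        Tendsto (fun α : ℝ => Φ α x) (nhdsWithin 0 (Set.Ioi 0)) (nhds x) := by
  exact stmt4' D hDB h ω δ hδ Φ fun α hα => ⟨(hΦ α hα).1, (hΦ α hα).2⟩

end
end

section
/- Let X be a complex Banach space, D ⊆ B dense in B, and let h : D → X be ω-pseudo-contractive for some ω ∈ ℝ, with δ > 0 as in the definition of ω-pseudo-contractivity. Then for every x ∈ B and every r ∈ (‖x‖, 1) there exists δ_r ∈ (0, δ) such that ‖Φ_α(x)‖ ≤ r for all α ∈ [0, δ_r]. -/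
open Filter Topology Metric Set

noncomputable section

set_option maxHeartbeats 1000000
lemma schwarz_bound {X : Type*} [NormedAddCommGroup X] [NormedSpace ℂ X]
    {F : X → X} (hF : DifferentiableOn ℂ F (ball (0:X) 1))
    (hmap : ∀ z ∈ ball (0:X) 1, F z ∈ ball (0:X) 1)
    {a b : X} (hab : ‖a - b‖ < 1 - ‖b‖) :
    ‖F a - F b‖ * (1 - ‖b‖) ≤ 2 * ‖a - b‖ := by
  have hb1 : ‖b‖ < 1 := by nlinarith [norm_nonneg (a - b)]
  have hpos : (0:ℝ) < 1 - ‖b‖ := by linarith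
  rcases eq_or_ne a b with rfl | hne
  · simp
  have hd0 : 0 < ‖a - b‖ := norm_pos_iff.mpr (sub_ne_zero.mpr hne)
  set d := ‖a - b‖ with hd
  set R₁ : ℝ := (1 - ‖b‖) / d with hR
  have hR1 : 1 < R₁ := (one_lt_div hd0).mpr hab
  set g : ℂ → X := fun z => b + z • (a - b) with hg
  have hgmaps : ∀ z ∈ ball (0:ℂ) R₁, g z ∈ ball (0:X) 1 := by
    intro z hz
    rw [mem_ball_zero_iff] at hz ⊢
    calc ‖b + z • (a - b)‖ ≤ ‖b‖ + ‖z‖ * d := by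
          simpa [norm_smul] using norm_add_le b (z • (a - b))
      _ < ‖b‖ + R₁ * d := by
          have := mul_lt_mul_of_pos_right hz hd0
          linarith
      _ = 1 := by rw [hR, div_mul_cancel₀ _ hd0.ne']; ring
  set f : ℂ → X := fun z => F (g z) with hf
  have hgd : Differentiable ℂ g := (differentiable_id.smul_const (a - b)).const_add b
  have hfd : DifferentiableOn ℂ f (ball (0:ℂ) R₁) :=
    hF.comp hgd.differentiableOn hgmaps
  have hf0 : f 0 = F b := by simp [hf, hg]
  have hf1 : f 1 = F a := by
    simp only [hf, hg, one_smul]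
    congr 1
    abel
  have hfmaps : MapsTo f (ball (0:ℂ) R₁) (ball (f 0) 2) := by
    intro z hz
    rw [mem_ball, dist_eq_norm]
    have h1 : ‖f z‖ < 1 := mem_ball_zero_iff.mp (hmap _ (hgmaps z hz))
    have h2 : ‖f 0‖ < 1 := by
      rw [hf0]; exact mem_ball_zero_iff.mp (hmap b (mem_ball_zero_iff.mpr hb1))
    calc ‖f z - f 0‖ ≤ ‖f z‖ + ‖f 0‖ := norm_sub_le _ _
      _ < 2 := by linarith
  have h1mem : (1:ℂ) ∈ ball (0:ℂ) R₁ := by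
    rw [mem_ball_zero_iff]; simpa using hR1
  have key := Complex.dist_le_div_mul_dist_of_mapsTo_ball hfd (hfmaps.mono_right ball_subset_closedBall) h1mem
  rw [hf1, hf0, dist_eq_norm, dist_eq_norm, sub_zero, norm_one, mul_one] at key
  have key2 : ‖F a - F b‖ ≤ 2 * d / (1 - ‖b‖) := by
    rwa [hR, div_div_eq_mul_div] at key
  calc ‖F a - F b‖ * (1 - ‖b‖) ≤ (2 * d / (1 - ‖b‖)) * (1 - ‖b‖) :=
        mul_le_mul_of_nonneg_right key2 hpos.le
    _ = 2 * d := by field_simp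

/-- Corollary `G1cor`: for `D ⊆ B` dense and `h : D → X`
`ω`-pseudo-contractive with Abel averages `Φ_α`, `α ∈ (0, δ)` (and `Φ_0 = I`), for every
`x ∈ B` and `r ∈ (‖x‖, 1)` there exists `δ_r ∈ (0, δ)` such that `‖Φ_α(x)‖ ≤ r` for all
`α ∈ [0, δ_r]`. -/
theorem stmt5 {X : Type*} [NormedAddCommGroup X] [NormedSpace ℂ X] [CompleteSpace X]
    (D : Set X) (hDB : D ⊆ ball (0 : X) 1) (hdense : ball (0 : X) 1 ⊆ closure D)
    (h : X → X) (ω : ℝ)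
    (δ : ℝ) (hδ : 0 < δ) (Φ : ℝ → X → X) (hΦ0 : ∀ x : X, Φ 0 x = x)
    (hΦ : ∀ α ∈ Set.Ioo (0 : ℝ) δ,
      IsAbelAvg D h ω α (Φ α) ∧ DifferentiableOn ℂ (Φ α) (ball (0 : X) 1)) :
    ∀ x ∈ ball (0 : X) 1, ∀ r ∈ Set.Ioo ‖x‖ 1,
      ∃ δr ∈ Set.Ioo (0 : ℝ) δ, ∀ α ∈ Set.Icc (0 : ℝ) δr, ‖Φ α x‖ ≤ r := by
  intro x hx r hr
  obtain ⟨htr, hr1⟩ := hr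
  set t := ‖x‖ with ht
  have ht0 : 0 ≤ t := norm_nonneg x
  have ht1 : t < 1 := mem_ball_zero_iff.mp hx
  set ε : ℝ := (r - t) * (1 - t) / 26 with hε
  have hε0 : 0 < ε := by
    apply div_pos (mul_pos (by linarith) (by linarith)) (by norm_num)
  -- pick x' ∈ D close to x
  have hxcl : x ∈ closure D := hdense hx
  obtain ⟨x', hx'D, hxx'⟩ := Metric.mem_closure_iff.mp hxcl ε hε0
  rw [dist_eq_norm] at hxx'
  have hx'1 : ‖x'‖ < 1 := mem_ball_zero_iff.mp (hDB hx'D)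
  have hx't : ‖x'‖ < t + ε := by
    calc ‖x'‖ = ‖x - (x - x')‖ := by congr 1; abel
      _ ≤ ‖x‖ + ‖x - x'‖ := norm_sub_le _ _
      _ < t + ε := by linarith
  set M : ℝ := |ω| + ‖h x'‖ + 1 with hM
  have hM0 : 0 < M := by positivity
  set δr : ℝ := min (δ/2) (min (ε / (2*M)) (1/(2*(|ω|+1)))) with hδr
  have hδr0 : 0 < δr := by
    apply lt_min (by linarith)
    exact lt_min (by positivity) (by positivity)
  have hδrδ : δr < δ := lt_of_le_of_lt (min_le_left _ _) (by linarith)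
  refine ⟨δr, ⟨hδr0, hδrδ⟩, ?_⟩
  intro α hα
  obtain ⟨hα0, hαδr⟩ := hα
  rcases eq_or_lt_of_le hα0 with h0 | hαpos
  · rw [← h0, hΦ0]; exact htr.le
  have hαδ : α ∈ Set.Ioo (0:ℝ) δ := ⟨hαpos, lt_of_le_of_lt hαδr hδrδ⟩
  obtain ⟨hA, hDiff⟩ := hΦ α hαδ
  -- basic bounds on α
  have hαε : α ≤ ε / (2*M) :=
    le_trans hαδr (le_trans (min_le_right _ _) (min_le_left _ _))
  have hαω' : α ≤ 1/(2*(|ω|+1)) :=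
    le_trans hαδr (le_trans (min_le_right _ _) (min_le_right _ _))
  have hαω : α * |ω| ≤ 1/2 := by
    have h3 : (0:ℝ) < 2*(|ω|+1) := by positivity
    rw [le_div_iff₀ h3] at hαω'
    nlinarith [abs_nonneg ω, hαpos.le]
  have hden : (1:ℝ)/2 ≤ 1 - α * ω := by
    nlinarith [le_abs_self ω, hαpos.le, neg_abs_le ω]
  have hne : (1 - α*ω) ≠ 0 := by positivity
  set c : ℂ := ((1 - α*ω : ℝ) : ℂ) with hcdef
  have hc : c ≠ 0 := Complex.ofReal_ne_zero.mpr hne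
  have hnc : ‖c‖ = 1 - α*ω := by
    rw [hcdef, Complex.norm_real, Real.norm_eq_abs, abs_of_pos (by linarith)]
  set v : X := c⁻¹ • (x' - (α:ℂ) • h x') with hvdef
  have hveq : x' - (α:ℂ) • h x' = c • v := by
    rw [hvdef, smul_smul, mul_inv_cancel₀ hc, one_smul]
  have hv_sub : v - x' = (c⁻¹ * (α:ℂ)) • ((ω:ℂ) • x' - h x') := by
    have hcc : c = 1 - (α:ℂ) * (ω:ℂ) := by rw [hcdef]; push_cast; ring
    have e1 : v - x' = c⁻¹ • ((x' - (α:ℂ) • h x') - c • x') := by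
      rw [smul_sub, hvdef, inv_smul_smul₀ hc]
    rw [e1, mul_smul]
    congr 1
    rw [hcc]
    module
  have hvx' : ‖v - x'‖ ≤ ε := by
    rw [hv_sub, norm_smul]
    have h1 : ‖c⁻¹ * (α:ℂ)‖ ≤ 2 * α := by
      rw [norm_mul, norm_inv, hnc, Complex.norm_real, Real.norm_eq_abs,
        abs_of_pos hαpos]
      have : (1 - α*ω)⁻¹ ≤ 2 := by
        rw [inv_le_comm₀ (by linarith) (by norm_num)]
        linarith
      nlinarith [hαpos.le]
    have h2 : ‖(ω:ℂ) • x' - h x'‖ ≤ |ω| + ‖h x'‖ := by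
      calc ‖(ω:ℂ) • x' - h x'‖ ≤ ‖(ω:ℂ) • x'‖ + ‖h x'‖ := norm_sub_le _ _
        _ ≤ |ω| + ‖h x'‖ := by
            rw [norm_smul, Complex.norm_real, Real.norm_eq_abs]
            nlinarith [abs_nonneg ω, hx'1.le, norm_nonneg x']
    have h3 : 2 * α * M ≤ ε := by
      rw [le_div_iff₀ (by positivity : (0:ℝ) < 2*M)] at hαε
      nlinarith [hM0]
    calc ‖c⁻¹ * (α:ℂ)‖ * ‖(ω:ℂ) • x' - h x'‖ ≤ (2*α) * (|ω| + ‖h x'‖) := by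
          apply mul_le_mul h1 h2 (norm_nonneg _) (by positivity)
      _ ≤ ε := by nlinarith [hαpos.le]
  have hvnorm : ‖v‖ ≤ t + 2*ε := by
    calc ‖v‖ = ‖x' + (v - x')‖ := by congr 1; abel
      _ ≤ ‖x'‖ + ‖v - x'‖ := norm_add_le _ _
      _ ≤ t + 2*ε := by linarith
  have hεsmall : 4*ε < 1 - t := by
    rw [hε]; nlinarith
  have hvball : v ∈ ball (0:X) 1 := by
    rw [mem_ball_zero_iff]; linarith
  -- uniqueness: x' = Φ α v
  obtain ⟨_, _, huniq⟩ := hA v hvball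
  have hx'eq : x' = Φ α v := huniq x' hx'D (by rw [← hcdef]; exact hveq)
  -- Schwarz estimate
  have hmap : ∀ z ∈ ball (0:X) 1, Φ α z ∈ ball (0:X) 1 := fun z hz => hDB (hA z hz).1
  have hxv : ‖x - v‖ < 2*ε := by
    calc ‖x - v‖ = ‖(x - x') + (x' - v)‖ := by congr 1; abel
      _ ≤ ‖x - x'‖ + ‖x' - v‖ := norm_add_le _ _
      _ < 2*ε := by
          have : ‖x' - v‖ = ‖v - x'‖ := norm_sub_rev _ _
          linarith
  have hab : ‖x - v‖ < 1 - ‖v‖ := by linarith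
  have key := schwarz_bound hDiff hmap hab
  rw [← hx'eq] at key
  -- conclude
  have hS0 : 0 ≤ ‖Φ α x - x'‖ := norm_nonneg _
  have htri : ‖Φ α x‖ ≤ ‖x'‖ + ‖Φ α x - x'‖ := by
    calc ‖Φ α x‖ = ‖x' + (Φ α x - x')‖ := by congr 1; abel
      _ ≤ ‖x'‖ + ‖Φ α x - x'‖ := norm_add_le _ _
  have hv2 : 1 - t - 2*ε ≤ 1 - ‖v‖ := by linarith
  have key2 : ‖Φ α x - x'‖ * (1 - t - 2*ε) ≤ 4*ε := by
    nlinarith [key, mul_le_mul_of_nonneg_left hv2 hS0]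
  have hdenpos : 0 < 1 - t - 2*ε := by linarith
  -- need ‖x'‖ + S ≤ r where S*(1-t-2ε) ≤ 4ε
  have hSle : ‖Φ α x - x'‖ ≤ r - t - ε := by
    rw [← le_div_iff₀ hdenpos] at key2
    have hgoal : 4*ε / (1 - t - 2*ε) ≤ r - t - ε := by
      rw [div_le_iff₀ hdenpos, hε]
      nlinarith [mul_pos (sub_pos.mpr htr) (sub_pos.mpr ht1)]
    linarith
  linarith

end
end

section
/- Let X be a complex Banach space, D ⊆ B balanced and dense in B, and let h : D → X be ω-pseudo-contractive for some ω ∈ ℝ. Suppose that for every x ∈ D the quotient (Φ_α(x) − x)/α converges in the weak topology of X to h(x) − ωx as α → 0⁺. Then h is ω-dissipative. -/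
open Filter Topology Metric Set

noncomputable section

private lemma keyreal' {A Z r t : ℝ} (hA0 : 0 ≤ A) (hA1 : A ≤ 1) (hZ1 : Z ≤ 1)
    (ht0 : 0 ≤ t) (ht1 : t ≤ 1) (hr : r ≤ A * Z)
    (H : A ^ 2 + Z ^ 2 - 2 * r ≤ t ^ 2 * (1 + A ^ 2 * Z ^ 2 - 2 * r)) :
    Z ≤ t + A * (1 - t ^ 2) := by
  have h2 : 0 ≤ 1 - A * Z := by nlinarith
  have h1 : (Z - A) ^ 2 ≤ (t * (1 - A * Z)) ^ 2 := by
    nlinarith [mul_nonneg (sub_nonneg.2 hr) (by nlinarith : (0:ℝ) ≤ 1 - t ^ 2)]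
  have h3 : Z - A ≤ t * (1 - A * Z) := by
    nlinarith [mul_nonneg ht0 h2, sq_nonneg (Z - A + t * (1 - A * Z))]
  nlinarith [mul_nonneg hA0 ht0, mul_nonneg (mul_nonneg (mul_nonneg hA0 hA0) ht0)
    (sub_nonneg.2 (show t ^ 2 ≤ (1:ℝ) by nlinarith))]

private lemma normSq_mobius' (a z : ℂ) :
    Complex.normSq (1 - (starRingEnd ℂ) a * z) - Complex.normSq (a - z)
      = (1 - Complex.normSq a) * (1 - Complex.normSq z) := by
  simp [Complex.normSq_apply, Complex.sub_re, Complex.sub_im, Complex.mul_re, Complex.mul_im,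
    Complex.conj_re, Complex.conj_im, Complex.one_re, Complex.one_im]
  ring

private lemma mobius_lt_one' {a z : ℂ} (ha : ‖a‖ < 1) (hz : ‖z‖ < 1) :
    ‖a - z‖ < ‖1 - (starRingEnd ℂ) a * z‖ := by
  have ha' : Complex.normSq a < 1 := by
    rw [Complex.normSq_eq_norm_sq]; nlinarith [norm_nonneg a]
  have hz' : Complex.normSq z < 1 := by
    rw [Complex.normSq_eq_norm_sq]; nlinarith [norm_nonneg z]
  have key := normSq_mobius' a z
  have h : Complex.normSq (a - z) < Complex.normSq (1 - (starRingEnd ℂ) a * z) := by nlinarith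
  rw [← Complex.sq_norm, ← Complex.sq_norm] at h
  exact lt_of_pow_lt_pow_left₀ 2 (norm_nonneg _) h

private lemma denom_ne_zero' {a z : ℂ} (ha : ‖a‖ < 1) (hz : ‖z‖ ≤ 1) :
    1 - (starRingEnd ℂ) a * z ≠ 0 := by
  intro h
  have h1 : (starRingEnd ℂ) a * z = 1 := by linear_combination -h
  have h2 : ‖(starRingEnd ℂ) a * z‖ < 1 := by
    rw [norm_mul, RCLike.norm_conj]
    nlinarith [norm_nonneg a, norm_nonneg z]
  rw [h1] at h2; simp at h2

/-- The Schwarz–Pick lemma for a holomorphic self-map of the unit disc. -/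
private lemma schwarzPick' {g : ℂ → ℂ} (hd : DifferentiableOn ℂ g (ball 0 1))
    (hm : Set.MapsTo g (ball 0 1) (ball 0 1)) {z : ℂ} (hz : z ∈ ball (0 : ℂ) 1) :
    ‖g 0 - g z‖ ≤ ‖z‖ * ‖1 - (starRingEnd ℂ) (g 0) * g z‖ := by
  have h0 : (0 : ℂ) ∈ ball (0 : ℂ) 1 := by simp
  have ha : ‖g 0‖ < 1 := mem_ball_zero_iff.1 (hm h0)
  set a := g 0 with ha_def
  set G : ℂ → ℂ := fun w => (a - g w) / (1 - (starRingEnd ℂ) a * g w) with hG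
  have hden : ∀ w ∈ ball (0 : ℂ) 1, 1 - (starRingEnd ℂ) a * g w ≠ 0 := fun w hw =>
    denom_ne_zero' ha (mem_ball_zero_iff.1 (hm hw)).le
  have hdG : DifferentiableOn ℂ G (ball 0 1) := by
    apply DifferentiableOn.div
    · exact (differentiableOn_const a).sub hd
    · exact (differentiableOn_const 1).sub ((differentiableOn_const _).mul hd)
    · exact hden
  have hmG : Set.MapsTo G (ball 0 1) (ball 0 1) := by
    intro w hw
    have hlt := mobius_lt_one' ha (mem_ball_zero_iff.1 (hm hw))
    have hpos : 0 < ‖1 - (starRingEnd ℂ) a * g w‖ := lt_of_le_of_lt (norm_nonneg _) hlt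
    rw [mem_ball_zero_iff]
    simp only [hG, norm_div]
    rw [div_lt_one hpos]
    exact hlt
  have hG0 : G 0 = 0 := by simp [hG, ← ha_def]
  have key := Complex.dist_le_div_mul_dist_of_mapsTo_ball hdG (by rw [hG0]; exact hmG.mono_right ball_subset_closedBall) hz
  rw [hG0, dist_zero_right, dist_zero_right, div_self one_ne_zero, one_mul] at key
  have hdz := hden z hz
  have e : ‖G z‖ = ‖a - g z‖ / ‖1 - (starRingEnd ℂ) a * g z‖ := by
    simp only [hG, norm_div]
  rw [e, div_le_iff₀ (norm_pos_iff.2 hdz)] at key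
  exact key

private lemma normsq_eq' (z : ℂ) : ‖z‖ ^ 2 = Complex.normSq z := by
  rw [Complex.sq_norm]

private lemma mob_bound' {a w : ℂ} {t : ℝ} (hA : ‖a‖ ≤ 1) (hZ : ‖w‖ ≤ 1) (ht0 : 0 ≤ t)
    (ht1 : t ≤ 1) (H : ‖a - w‖ ≤ t * ‖1 - (starRingEnd ℂ) a * w‖) :
    ‖w‖ ≤ t + ‖a‖ * (1 - t ^ 2) := by
  set r : ℝ := ((starRingEnd ℂ) a * w).re with hr_def
  have hr : r ≤ ‖a‖ * ‖w‖ := by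
    calc r ≤ ‖(starRingEnd ℂ) a * w‖ := Complex.re_le_norm _
    _ = ‖a‖ * ‖w‖ := by
        rw [norm_mul, RCLike.norm_conj]
  have e1 : ‖a - w‖ ^ 2 = ‖a‖ ^ 2 + ‖w‖ ^ 2 - 2 * r := by
    rw [normsq_eq', normsq_eq', normsq_eq', hr_def]
    simp [Complex.normSq_apply, Complex.sub_re, Complex.sub_im, Complex.mul_re, Complex.mul_im,
      Complex.conj_re, Complex.conj_im]
    ring
  have e2 : ‖1 - (starRingEnd ℂ) a * w‖ ^ 2 = 1 + ‖a‖ ^ 2 * ‖w‖ ^ 2 - 2 * r := by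
    rw [normsq_eq', normsq_eq', normsq_eq', hr_def]
    simp [Complex.normSq_apply, Complex.sub_re, Complex.sub_im, Complex.mul_re, Complex.mul_im,
      Complex.conj_re, Complex.conj_im, Complex.one_re, Complex.one_im]
    ring
  have Hsq : ‖a - w‖ ^ 2 ≤ t ^ 2 * ‖1 - (starRingEnd ℂ) a * w‖ ^ 2 := by
    nlinarith [norm_nonneg (a - w), norm_nonneg (1 - (starRingEnd ℂ) a * w)]
  rw [e1, e2] at Hsq
  exact keyreal' (norm_nonneg a) hA hZ ht0 ht1 hr Hsq

/-- Core estimate: if `Φ` is a holomorphic self-map of the unit ball, `0 < ‖x‖ < 1` and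
`f ∈ J(x)`, then `Re f(Φ x) ≤ ‖x‖² + ‖Φ 0‖ (1 - ‖x‖²)`. -/
private lemma core_est {X : Type*} [NormedAddCommGroup X] [NormedSpace ℂ X] {Φ : X → X}
    (hmΦ : Set.MapsTo Φ (ball (0 : X) 1) (ball (0 : X) 1))
    (hdΦ : DifferentiableOn ℂ Φ (ball (0 : X) 1))
    {x : X} (hx0 : 0 < ‖x‖) (hx1 : ‖x‖ < 1) {f : X →L[ℂ] ℂ} (hf : f ∈ Jset x) :
    (f (Φ x)).re ≤ ‖x‖ ^ 2 + ‖Φ 0‖ * (1 - ‖x‖ ^ 2) := by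
  obtain ⟨hfx, hfn2⟩ := hf
  have hfn : ‖f‖ = ‖x‖ := by
    nlinarith [norm_nonneg f, norm_nonneg x]
  set u : X := ((‖x‖ : ℂ))⁻¹ • x with hu_def
  have hxC : (‖x‖ : ℂ) ≠ 0 := by
    simpa using hx0.ne'
  have hu : ‖u‖ = 1 := by
    rw [hu_def, norm_smul, norm_inv, Complex.norm_real, Real.norm_eq_abs, abs_of_pos hx0,
      inv_mul_cancel₀ hx0.ne']
  set g : ℂ → ℂ := fun ζ => ((‖x‖ : ℂ))⁻¹ * f (Φ (ζ • u)) with hg_def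
  have hms : Set.MapsTo (fun ζ : ℂ => ζ • u) (ball (0 : ℂ) 1) (ball (0 : X) 1) := by
    intro ζ hζ
    rw [mem_ball_zero_iff] at *
    rw [norm_smul, hu, mul_one]
    exact hζ
  have hnorm_bd : ∀ ζ ∈ ball (0 : ℂ) 1, ‖f (Φ (ζ • u))‖ ≤ ‖x‖ * ‖Φ (ζ • u)‖ := by
    intro ζ hζ
    calc ‖f (Φ (ζ • u))‖ ≤ ‖f‖ * ‖Φ (ζ • u)‖ := f.le_opNorm _
    _ = ‖x‖ * ‖Φ (ζ • u)‖ := by rw [hfn]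
  have hmg : Set.MapsTo g (ball (0 : ℂ) 1) (ball (0 : ℂ) 1) := by
    intro ζ hζ
    rw [mem_ball_zero_iff]
    have h1 : ‖Φ (ζ • u)‖ < 1 := mem_ball_zero_iff.1 (hmΦ (hms hζ))
    simp only [hg_def, norm_mul, norm_inv, Complex.norm_real, Real.norm_eq_abs,
      abs_of_pos hx0]
    calc ‖x‖⁻¹ * ‖f (Φ (ζ • u))‖ ≤ ‖x‖⁻¹ * (‖x‖ * ‖Φ (ζ • u)‖) :=
          mul_le_mul_of_nonneg_left (hnorm_bd ζ hζ) (by positivity)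
    _ = ‖Φ (ζ • u)‖ := by field_simp
    _ < 1 := h1
  have hdg : DifferentiableOn ℂ g (ball (0 : ℂ) 1) := by
    apply DifferentiableOn.const_mul
    have h1 : DifferentiableOn ℂ (fun ζ : ℂ => Φ (ζ • u)) (ball (0 : ℂ) 1) :=
      hdΦ.comp ((differentiable_id.smul_const u).differentiableOn) hms
    exact f.differentiable.comp_differentiableOn h1
  have hzmem : ((‖x‖ : ℂ)) ∈ ball (0 : ℂ) 1 := by
    rw [mem_ball_zero_iff, Complex.norm_real, Real.norm_eq_abs, abs_of_pos hx0]
    exact hx1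
  have hsp := schwarzPick' hdg hmg hzmem
  have hg0 : ‖g 0‖ < 1 := mem_ball_zero_iff.1 (hmg (by simp))
  have hgz : ‖g (‖x‖ : ℂ)‖ < 1 := mem_ball_zero_iff.1 (hmg hzmem)
  have hnx : ‖((‖x‖ : ℂ))‖ = ‖x‖ := by
    rw [Complex.norm_real, Real.norm_eq_abs, abs_of_pos hx0]
  rw [hnx] at hsp
  have hbd := mob_bound' hg0.le hgz.le (norm_nonneg x) hx1.le hsp
  have ha_bd : ‖g 0‖ ≤ ‖Φ 0‖ := by
    have h0u : (0 : ℂ) • u = (0 : X) := by simp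
    simp only [hg_def, h0u, norm_mul, norm_inv, Complex.norm_real, Real.norm_eq_abs,
      abs_of_pos hx0]
    calc ‖x‖⁻¹ * ‖f (Φ 0)‖ ≤ ‖x‖⁻¹ * (‖x‖ * ‖Φ 0‖) := by
          refine mul_le_mul_of_nonneg_left ?_ (by positivity)
          calc ‖f (Φ 0)‖ ≤ ‖f‖ * ‖Φ 0‖ := f.le_opNorm _
          _ = ‖x‖ * ‖Φ 0‖ := by rw [hfn]
    _ = ‖Φ 0‖ := by field_simp
  have hxu : ((‖x‖ : ℂ)) • u = x := by
    rw [hu_def, smul_smul, mul_inv_cancel₀ hxC, one_smul]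
  have hfΦx : f (Φ x) = (‖x‖ : ℂ) * g (‖x‖ : ℂ) := by
    simp only [hg_def, hxu]
    field_simp
  have h1t : 0 ≤ 1 - ‖x‖ ^ 2 := by nlinarith
  calc (f (Φ x)).re = ‖x‖ * (g (‖x‖ : ℂ)).re := by rw [hfΦx, Complex.re_ofReal_mul]
  _ ≤ ‖x‖ * ‖g (‖x‖ : ℂ)‖ := by
      refine mul_le_mul_of_nonneg_left ?_ hx0.le
      exact Complex.re_le_norm _
  _ ≤ ‖x‖ * (‖x‖ + ‖g 0‖ * (1 - ‖x‖ ^ 2)) := mul_le_mul_of_nonneg_left hbd hx0.le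
  _ ≤ ‖x‖ ^ 2 + ‖Φ 0‖ * (1 - ‖x‖ ^ 2) := by
      nlinarith [mul_nonneg h1t (sub_nonneg.2 ha_bd),
        mul_nonneg (mul_nonneg (norm_nonneg (g 0)) h1t) (sub_nonneg.2 hx1.le)]

/-- Lemma `H2lm`: if `D ⊆ B` is balanced and dense, `h : D → X` is
`ω`-pseudo-contractive with Abel averages `Φ_α`, and for every `x ∈ D` the quotient
`(Φ_α(x) − x)/α` converges weakly to `h(x) − ωx` as `α → 0⁺`, then `h` is
`ω`-dissipative. -/
theorem stmt7 {X : Type*} [NormedAddCommGroup X] [NormedSpace ℂ X] [CompleteSpace X]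
    (D : Set X) (hDB : D ⊆ ball (0 : X) 1) (hdense : ball (0 : X) 1 ⊆ closure D)
    (hbal : Balanced ℂ D) (h : X → X) (ω : ℝ)
    (δ : ℝ) (hδ : 0 < δ) (Φ : ℝ → X → X)
    (hΦ : ∀ α ∈ Set.Ioo (0 : ℝ) δ,
      IsAbelAvg D h ω α (Φ α) ∧ DifferentiableOn ℂ (Φ α) (ball (0 : X) 1))
    (hweak : ∀ x ∈ D, ∀ f : X →L[ℂ] ℂ,
      Tendsto (fun α : ℝ => f ((α : ℂ)⁻¹ • (Φ α x - x))) (nhdsWithin 0 (Set.Ioi 0))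
        (nhds (f (h x - (ω : ℂ) • x)))) :
    OmegaDissip D h ω := by
  -- `0 ∈ D` since `D` is nonempty (dense in the ball) and balanced
  have hD0 : (0 : X) ∈ D := by
    have h0 : (0 : X) ∈ closure D := hdense (by simp)
    obtain ⟨x₀, hx₀⟩ : D.Nonempty := by
      by_contra hne
      rw [Set.not_nonempty_iff_eq_empty] at hne
      simp [hne] at h0
    have h00 := hbal 0 (by simp) (Set.smul_mem_smul_set (a := (0:ℂ)) hx₀)
    simpa using h00
  -- a sequence `αₙ → 0⁺` inside `(0, δ)`
  set a : ℕ → ℝ := fun n => δ / ((n : ℝ) + 2) with ha_def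
  have ha_pos : ∀ n, 0 < a n := fun n => by positivity
  have ha_mem : ∀ n, a n ∈ Set.Ioo (0 : ℝ) δ := by
    intro n
    refine ⟨ha_pos n, ?_⟩
    rw [ha_def, div_lt_iff₀ (by positivity)]
    nlinarith [Nat.cast_nonneg (α := ℝ) n]
  have ha_tendsto : Tendsto a atTop (nhdsWithin (0 : ℝ) (Set.Ioi 0)) := by
    rw [tendsto_nhdsWithin_iff]
    constructor
    · exact Filter.Tendsto.div_atTop tendsto_const_nhds
        (tendsto_atTop_add_const_right atTop 2 tendsto_natCast_atTop_atTop)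
    · exact Filter.Eventually.of_forall fun n => ha_pos n
  -- the sequence `yₙ = Φ_{αₙ}(0)/αₙ` converges weakly, hence is norm bounded
  set y : ℕ → X := fun n => ((a n : ℝ) : ℂ)⁻¹ • (Φ (a n) 0 - 0) with hy_def
  have hy_lim : ∀ f : X →L[ℂ] ℂ,
      Tendsto (fun n => f (y n)) atTop (nhds (f (h 0 - (ω : ℂ) • (0 : X)))) := fun f =>
    (hweak 0 hD0 f).comp ha_tendsto
  obtain ⟨M, hM⟩ : ∃ M : ℝ, ∀ n, ‖y n‖ ≤ M := by
    have hpb : ∀ f : StrongDual ℂ X, ∃ C, ∀ n,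
        ‖(NormedSpace.inclusionInDoubleDual ℂ X (y n)) f‖ ≤ C := by
      intro f
      obtain ⟨C, hC⟩ := (hy_lim f).norm.bddAbove_range
      exact ⟨C, fun n => by simpa using hC (Set.mem_range_self n)⟩
    obtain ⟨C', hC'⟩ := banach_steinhaus hpb
    refine ⟨C', fun n => ?_⟩
    have := (NormedSpace.inclusionInDoubleDualLi ℂ (E := X)).norm_map (y n)
    rw [← this]
    exact hC' n
  -- conclude with `ε = 1/2`, `ς = M`
  refine ⟨1/2, by norm_num, M, fun x hx hx1 hx2 f hf => ?_⟩
  have hx0 : 0 < ‖x‖ := by linarith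
  have h1t : 0 ≤ 1 - ‖x‖ ^ 2 := by nlinarith
  have key : ∀ n, (f (((a n : ℝ) : ℂ)⁻¹ • (Φ (a n) x - x))).re ≤ M * (1 - ‖x‖ ^ 2) := by
    intro n
    obtain ⟨hAA, hdiff⟩ := hΦ (a n) (ha_mem n)
    have hmΦ : Set.MapsTo (Φ (a n)) (ball (0 : X) 1) (ball (0 : X) 1) :=
      fun z hz => hDB (hAA z hz).1
    have hcore := core_est hmΦ hdiff hx0 hx2 hf
    have hsmul : f (((a n : ℝ) : ℂ)⁻¹ • (Φ (a n) x - x))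
        = (((a n)⁻¹ : ℝ) : ℂ) * (f (Φ (a n) x) - f x) := by
      rw [map_smul, map_sub, Complex.ofReal_inv]
      rfl
    rw [hsmul, hf.1, Complex.re_ofReal_mul]
    have hre : (f (Φ (a n) x) - ((‖x‖ ^ 2 : ℝ) : ℂ)).re = (f (Φ (a n) x)).re - ‖x‖ ^ 2 := by
      rw [Complex.sub_re, Complex.ofReal_re]
    rw [hre]
    have hyn : ‖Φ (a n) 0‖ = a n * ‖y n‖ := by
      rw [hy_def]
      simp only [sub_zero, norm_smul, norm_inv, Complex.norm_real, Real.norm_eq_abs,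
        abs_of_pos (ha_pos n)]
      field_simp
      rw [mul_div_assoc, div_self (ha_pos n).ne', mul_one]
    calc (a n)⁻¹ * ((f (Φ (a n) x)).re - ‖x‖ ^ 2)
        ≤ (a n)⁻¹ * (‖Φ (a n) 0‖ * (1 - ‖x‖ ^ 2)) :=
          mul_le_mul_of_nonneg_left (by linarith) (by positivity)
      _ = ‖y n‖ * (1 - ‖x‖ ^ 2) := by
          rw [hyn, ← mul_assoc, ← mul_assoc, inv_mul_cancel₀ (ha_pos n).ne', one_mul]
      _ ≤ M * (1 - ‖x‖ ^ 2) := mul_le_mul_of_nonneg_right (hM n) h1t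
  have hlim : Tendsto (fun n => (f (((a n : ℝ) : ℂ)⁻¹ • (Φ (a n) x - x))).re) atTop
      (nhds ((f (h x - (ω : ℂ) • x)).re)) :=
    (Complex.continuous_re.tendsto _).comp ((hweak x hx f).comp ha_tendsto)
  have hfinal : (f (h x - (ω : ℂ) • x)).re ≤ M * (1 - ‖x‖ ^ 2) :=
    le_of_tendsto hlim (Filter.Eventually.of_forall key)
  have hexp : (f (h x - (ω : ℂ) • x)).re = (f (h x)).re - ω * ‖x‖ ^ 2 := by
    rw [map_sub, map_smul, Complex.sub_re]
    have : ((ω : ℂ) • f x).re = ω * ‖x‖ ^ 2 := by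
      rw [hf.1, smul_eq_mul, ← Complex.ofReal_mul, Complex.ofReal_re]
    rw [this]
  rw [hexp] at hfinal
  linarith


end
end

section
/- Let X be a complex Banach space and let T : 𝒟(T) ⊆ X → X be a closed, densely defined linear operator with nonempty resolvent set such that Re⟨Tx, x*⟩ ≤ 0 for each x ∈ 𝒟(T) and each x* ∈ J(x). Let ω > 0 and let g ∈ Hol(B, B_ω), i.e. g is holomorphic on B with ‖g(x)‖ < ω for all x ∈ B. Then the map h = T + g, defined on D = 𝒟(T) ∩ B, is ω-dissipative. -/
open Filter Topology Metric Set

noncomputable section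

/-- Proposition `E1as`: let `T : 𝒟(T) ⊆ X → X` be a closed, densely
defined linear operator with nonempty resolvent set satisfying `Re⟨Tx, x*⟩ ≤ 0` for all
`x ∈ 𝒟(T)`, `x* ∈ J(x)`, and let `g ∈ Hol(B, B_ω)` for some `ω > 0`. Then
`h = T + g`, defined on `D = 𝒟(T) ∩ B`, is `ω`-dissipative. -/
theorem stmt13 {X : Type*} [NormedAddCommGroup X] [NormedSpace ℂ X] [CompleteSpace X]
    (T : X →ₗ.[ℂ] X)
    (hTclosed : IsClosed (T.graph : Set (X × X)))
    (hTdense : Dense (T.domain : Set X))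
    (hTres : ∃ (lam : ℂ) (R : X →L[ℂ] X),
      (∀ y : X, ∃ hy : R y ∈ T.domain, lam • R y - T ⟨R y, hy⟩ = y) ∧
      (∀ x : T.domain, R (lam • (x : X) - T x) = (x : X)))
    (hTdiss : ∀ x : T.domain, ∀ f ∈ Jset (x : X), (f (T x)).re ≤ 0)
    (ω : ℝ) (hω : 0 < ω)
    (g : X → X) (ghol : DifferentiableOn ℂ g (ball (0 : X) 1))
    (gbdd : ∀ x ∈ ball (0 : X) 1, ‖g x‖ < ω) :
    ∃ ε > 0, ∃ ς : ℝ, ∀ (x : X) (hx : x ∈ T.domain), ‖x‖ < 1 → 1 - ε < ‖x‖ →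
      ∀ f ∈ Jset x,
        (f (T ⟨x, hx⟩ + g x)).re ≤ ω * ‖x‖ ^ 2 + ς * (1 - ‖x‖ ^ 2) := by
  refine ⟨1, one_pos, ω, ?_⟩
  intro x hx hx1 _ f hf
  have hfx : ‖f‖ = ‖x‖ := by
    have h2 := hf.2
    nlinarith [norm_nonneg f, norm_nonneg x]
  have h1 : (f (T ⟨x, hx⟩ + g x)).re = (f (T ⟨x, hx⟩)).re + (f (g x)).re := by
    simp [map_add]
  have h2 := hTdiss ⟨x, hx⟩ f hf
  have h3 : (f (g x)).re ≤ ‖x‖ * ω := by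
    calc (f (g x)).re ≤ ‖f (g x)‖ := Complex.re_le_norm _
      _ ≤ ‖f‖ * ‖g x‖ := f.le_opNorm _
      _ ≤ ‖x‖ * ω := by
          rw [hfx]
          exact mul_le_mul_of_nonneg_left
            (le_of_lt (gbdd x (mem_ball_zero_iff.mpr hx1))) (norm_nonneg x)
  rw [h1]
  nlinarith [norm_nonneg x]

end
end

section
/- Let X be a complex Banach space, h ∈ Hol(B, X) with h(0) = 0, ω ∈ ℝ, and α ∈ ℝ \ {0} with αω ≠ 1. Suppose that 1/α ∉ σ(h′(0)) and that the Abel average Φ_α is well defined and belongs to Hol(B). Then Φ_α(0) = 0, the Fréchet derivative of Φ_α at 0 is Φ_α′(0) = (1 − αω)(I − α h′(0))^{−1}, and σ(Φ_α′(0)) = ψ(σ(h′(0))), where ψ(ζ) = (1 − αω)/(1 − αζ). -/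
open Filter Topology Metric Set

noncomputable section

/-- Auxiliary: a nonzero scalar multiple of an element is a unit iff the element is. -/
lemma isUnit_smul_iff_aux {A : Type*} [Ring A] [Algebra ℂ A] {c : ℂ} (hc : c ≠ 0) (x : A) :
    IsUnit (c • x) ↔ IsUnit x := by
  have h1 : IsUnit ((algebraMap ℂ A) c) := (isUnit_iff_ne_zero.mpr hc).map (algebraMap ℂ A)
  rw [Algebra.smul_def, ← h1.unit_spec]
  exact Units.isUnit_units_mul h1.unit x

/-- Auxiliary: membership in the spectrum of a nonzero scalar multiple. -/
lemma spectrum_smul_mem_aux {A : Type*} [Ring A] [Algebra ℂ A] {c : ℂ} (hc : c ≠ 0)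
    (x : A) (μ : ℂ) : μ ∈ spectrum ℂ (c • x) ↔ c⁻¹ * μ ∈ spectrum ℂ x := by
  have H := spectrum.smul_mem_smul_iff (a := x) (s := c⁻¹ * μ) (r := Units.mk0 c hc)
  simpa [Units.smul_def, mul_inv_cancel_left₀ hc] using H

/-- from the proof of Theorem `3tm`: if `h ∈ Hol(B, X)`, `h(0) = 0`,
`1/α ∉ σ(h′(0))` and the Abel average `Φ_α ∈ Hol(B)`, then `Φ_α(0) = 0`,
`Φ_α′(0) = (1 − αω)(I − αh′(0))⁻¹`, and `σ(Φ_α′(0)) = ψ(σ(h′(0)))` with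
`ψ(ζ) = (1 − αω)/(1 − αζ)`. -/
theorem stmt14 {X : Type*} [NormedAddCommGroup X] [NormedSpace ℂ X] [CompleteSpace X]
    (h : X → X) (hhol : DifferentiableOn ℂ h (ball (0 : X) 1)) (h0 : h 0 = 0)
    (ω α : ℝ) (hα : α ≠ 0) (hαω : α * ω ≠ 1)
    (hspec : ((α : ℂ)⁻¹) ∉ spectrum ℂ (fderiv ℂ h 0))
    (Φ : X → X) (hΦ : IsAbelAvg (ball (0 : X) 1) h ω α Φ)
    (hΦhol : DifferentiableOn ℂ Φ (ball (0 : X) 1)) :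
    Φ 0 = 0 ∧
    ((ContinuousLinearMap.id ℂ X - (α : ℂ) • fderiv ℂ h 0).comp (fderiv ℂ Φ 0) =
      ((1 - α * ω : ℝ) : ℂ) • ContinuousLinearMap.id ℂ X) ∧
    ((fderiv ℂ Φ 0).comp (ContinuousLinearMap.id ℂ X - (α : ℂ) • fderiv ℂ h 0) =
      ((1 - α * ω : ℝ) : ℂ) • ContinuousLinearMap.id ℂ X) ∧
    spectrum ℂ (fderiv ℂ Φ 0) =
      (fun ζ : ℂ => ((1 - α * ω : ℝ) : ℂ) / (1 - (α : ℂ) * ζ)) '' spectrum ℂ (fderiv ℂ h 0) := by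
  classical
  set a := fderiv ℂ h 0 with ha_def
  set D := fderiv ℂ Φ 0 with hD_def
  set c : ℂ := ((1 - α * ω : ℝ) : ℂ) with hc_def
  have hc : c ≠ 0 := by
    simp only [hc_def, ne_eq, Complex.ofReal_eq_zero, sub_eq_zero]
    exact fun H => hαω H.symm
  have hαC : (α : ℂ) ≠ 0 := Complex.ofReal_ne_zero.mpr hα
  have h0ball : (0 : X) ∈ ball (0 : X) 1 := mem_ball_self one_pos
  have hΦ0 : Φ 0 = 0 := by
    refine ((hΦ 0 h0ball).2.2 0 h0ball ?_).symm
    simp [h0]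
  have hDdiff : HasFDerivAt Φ D 0 :=
    (hΦhol.differentiableAt (isOpen_ball.mem_nhds h0ball)).hasFDerivAt
  have hadiff : HasFDerivAt h a 0 :=
    (hhol.differentiableAt (isOpen_ball.mem_nhds h0ball)).hasFDerivAt
  have hcomp : HasFDerivAt (fun x => Φ x - (α : ℂ) • h (Φ x))
      (D - (α : ℂ) • a.comp D) 0 := by
    have ha' : HasFDerivAt h a (Φ 0) := by rw [hΦ0]; exact hadiff
    exact hDdiff.sub ((ha'.comp 0 hDdiff).const_smul (α : ℂ))
  have hev : (fun x => Φ x - (α : ℂ) • h (Φ x)) =ᶠ[𝓝 (0 : X)] (fun x => c • x) := by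
    filter_upwards [isOpen_ball.mem_nhds h0ball] with x hx
    exact (hΦ x hx).2.1
  have hlin : HasFDerivAt (fun x : X => c • x) (c • ContinuousLinearMap.id ℂ X) 0 := by
    exact (c • ContinuousLinearMap.id ℂ X).hasFDerivAt
  have hkey : D - (α : ℂ) • a.comp D = c • ContinuousLinearMap.id ℂ X :=
    (hcomp.congr_of_eventuallyEq hev.symm).unique hlin
  set A_ : X →L[ℂ] X := 1 - (α : ℂ) • a with hA_def
  have hmul : A_ * D = c • (1 : X →L[ℂ] X) := by
    rw [hA_def, sub_mul, one_mul, smul_mul_assoc, ContinuousLinearMap.mul_def,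
      ContinuousLinearMap.one_def, hkey]
  have hAunit : IsUnit A_ := by
    have h1 : IsUnit ((algebraMap ℂ (X →L[ℂ] X)) (α : ℂ)⁻¹ - a) := spectrum.notMem_iff.mp hspec
    have h2 : (α : ℂ) • ((algebraMap ℂ (X →L[ℂ] X)) (α : ℂ)⁻¹ - a) = A_ := by
      rw [hA_def, Algebra.algebraMap_eq_smul_one, smul_sub, smul_smul,
        mul_inv_cancel₀ hαC, one_smul]
    rw [← h2]
    exact (isUnit_smul_iff_aux hαC _).mpr h1
  obtain ⟨u, hu⟩ := hAunit
  have hD : D = c • (↑u⁻¹ : X →L[ℂ] X) := by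
    calc D = ↑u⁻¹ * (↑u * D) := (u.inv_mul_cancel_left D).symm
    _ = ↑u⁻¹ * (c • 1) := by rw [hu, hmul]
    _ = c • ↑u⁻¹ := by rw [mul_smul_comm, mul_one]
  have hmul2 : D * A_ = c • (1 : X →L[ℂ] X) := by
    rw [hD, ← hu, smul_mul_assoc, u.inv_mul]
  refine ⟨hΦ0, ?_, ?_, ?_⟩
  · simpa only [← ContinuousLinearMap.mul_def, ← ContinuousLinearMap.one_def, ← hA_def]
      using hmul
  · simpa only [← ContinuousLinearMap.mul_def, ← ContinuousLinearMap.one_def, ← hA_def]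
      using hmul2
  · -- spectral mapping
    have lem1 : ∀ lam : ℂ, lam ∈ spectrum ℂ A_ ↔ (1 - lam) / (α : ℂ) ∈ spectrum ℂ a := by
      intro lam
      rw [spectrum.mem_iff, spectrum.mem_iff, not_iff_not]
      have hcoef : (-(α : ℂ)) * ((1 - lam) / (α : ℂ)) = lam - 1 := by
        field_simp
        ring
      have key : (algebraMap ℂ (X →L[ℂ] X)) lam - A_ =
          (-(α : ℂ)) • ((algebraMap ℂ (X →L[ℂ] X)) ((1 - lam) / (α : ℂ)) - a) := by
        rw [hA_def, Algebra.algebraMap_eq_smul_one, Algebra.algebraMap_eq_smul_one,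
          smul_sub, smul_smul, hcoef]
        module
      rw [key, isUnit_smul_iff_aux (neg_ne_zero.mpr hαC) _]
    have hzero : (0 : ℂ) ∉ spectrum ℂ (↑u⁻¹ : X →L[ℂ] X) :=
      spectrum.zero_notMem ℂ u⁻¹.isUnit
    have huinv : ∀ ν : ℂ, ν ≠ 0 →
        (ν ∈ spectrum ℂ (↑u⁻¹ : X →L[ℂ] X) ↔ ν⁻¹ ∈ spectrum ℂ A_) := by
      intro ν hν0
      have H := spectrum.inv_mem_iff (R := ℂ) (r := (Units.mk0 ν hν0)⁻¹) (a := u)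
      simpa [hu] using H.symm
    have hmemD : ∀ μ : ℂ, μ ∈ spectrum ℂ D ↔
        c⁻¹ * μ ∈ spectrum ℂ (↑u⁻¹ : X →L[ℂ] X) := by
      intro μ
      rw [hD]
      exact spectrum_smul_mem_aux hc _ μ
    ext μ
    simp only [Set.mem_image]
    rw [hmemD]
    constructor
    · intro hμ
      have hν0 : c⁻¹ * μ ≠ 0 := fun H => hzero (H ▸ hμ)
      have hμ0 : μ ≠ 0 := fun H => hν0 (by simp [H])
      have hinv := (huinv _ hν0).mp hμ
      rw [lem1] at hinv
      refine ⟨(1 - (c⁻¹ * μ)⁻¹) / (α : ℂ), hinv, ?_⟩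
      show c / _ = μ
      have hden : 1 - (α : ℂ) * ((1 - (c⁻¹ * μ)⁻¹) / (α : ℂ)) = (c⁻¹ * μ)⁻¹ := by
        field_simp
        ring
      rw [hden, div_eq_mul_inv, inv_inv, mul_inv_cancel_left₀ hc]
    · rintro ⟨ζ, hζ, rfl⟩
      show c⁻¹ * (c / _) ∈ _
      have h1 : 1 - (α : ℂ) * ζ ≠ 0 := by
        intro H
        apply hspec
        have hz : ζ = (α : ℂ)⁻¹ := by
          have : (α : ℂ) * ζ = 1 := by linear_combination -H
          field_simp [eq_comm] at this ⊢
          linear_combination this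
        exact hz ▸ hζ
      have hν : c⁻¹ * (c / (1 - (α : ℂ) * ζ)) = (1 - (α : ℂ) * ζ)⁻¹ := by
        field_simp
      rw [hν, huinv _ (inv_ne_zero h1), inv_inv, lem1]
      have hz2 : (1 - (1 - (α : ℂ) * ζ)) / (α : ℂ) = ζ := by
        field_simp
        ring
      rw [hz2]
      exact hζ

end
end

section
/- Let X be a complex Banach space, h ∈ Hol(B, X) with h(0) = 0, ω ∈ ℝ, and α ∈ ℝ \ {0} with αω ≠ 1. Suppose that 1/α ∉ σ(h′(0)) and that the Abel average Φ_α is well defined and belongs to Hol(B). Then Ker(I − Φ_α′(0)) = Ker(ωI − h′(0)) and Im(I − Φ_α′(0)) = Im(ωI − h′(0)), where Φ_α′(0) denotes the Fréchet derivative of Φ_α at 0. -/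
open Filter Topology Metric Set

noncomputable section

/-- equations (19) in the proof of Theorem `3tm`: under the same
hypotheses as Statement 14, `Ker(I − Φ_α′(0)) = Ker(ωI − h′(0))` and
`Im(I − Φ_α′(0)) = Im(ωI − h′(0))`. -/
theorem stmt15 {X : Type*} [NormedAddCommGroup X] [NormedSpace ℂ X] [CompleteSpace X]
    (h : X → X) (hhol : DifferentiableOn ℂ h (ball (0 : X) 1)) (h0 : h 0 = 0)
    (ω α : ℝ) (hα : α ≠ 0) (hαω : α * ω ≠ 1)
    (hspec : ((α : ℂ)⁻¹) ∉ spectrum ℂ (fderiv ℂ h 0))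
    (Φ : X → X) (hΦ : IsAbelAvg (ball (0 : X) 1) h ω α Φ)
    (hΦhol : DifferentiableOn ℂ Φ (ball (0 : X) 1)) :
    LinearMap.ker ((ContinuousLinearMap.id ℂ X - fderiv ℂ Φ 0 : X →L[ℂ] X) : X →ₗ[ℂ] X) =
      LinearMap.ker (((ω : ℂ) • ContinuousLinearMap.id ℂ X - fderiv ℂ h 0 : X →L[ℂ] X) : X →ₗ[ℂ] X) ∧
    LinearMap.range ((ContinuousLinearMap.id ℂ X - fderiv ℂ Φ 0 : X →L[ℂ] X) : X →ₗ[ℂ] X) =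
      LinearMap.range (((ω : ℂ) • ContinuousLinearMap.id ℂ X - fderiv ℂ h 0 : X →L[ℂ] X) : X →ₗ[ℂ] X) := by
  classical
  set H : X →L[ℂ] X := fderiv ℂ h 0 with hH
  have h0ball : (0 : X) ∈ ball (0 : X) 1 := by simp
  have hopen : IsOpen (ball (0 : X) 1) := isOpen_ball
  have hnhds : ball (0 : X) 1 ∈ 𝓝 (0 : X) := hopen.mem_nhds h0ball
  -- Φ 0 = 0
  obtain ⟨hmem, heq, huniq⟩ := hΦ 0 h0ball
  have hΦ0 : Φ 0 = 0 := by
    refine (huniq 0 h0ball ?_).symm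
    simp [h0]
  set c : ℂ := ((1 - α * ω : ℝ) : ℂ) with hc
  -- differentiability
  have dΦ : DifferentiableAt ℂ Φ 0 := hΦhol.differentiableAt hnhds
  have dh : DifferentiableAt ℂ h 0 := hhol.differentiableAt hnhds
  have dhΦ : DifferentiableAt ℂ (fun x => h (Φ x)) 0 := by
    have : DifferentiableAt ℂ h (Φ 0) := by rw [hΦ0]; exact dh
    exact this.comp 0 dΦ
  set A : X →L[ℂ] X := fderiv ℂ Φ 0 with hA
  -- the functional identity near 0
  have hev : (fun x => Φ x - (α : ℂ) • h (Φ x)) =ᶠ[𝓝 (0 : X)]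
      (fun x => c • x) := by
    filter_upwards [hnhds] with x hx
    exact (hΦ x hx).2.1
  have hfd := hev.fderiv_eq (𝕜 := ℂ)
  have hrhs : fderiv ℂ (fun x : X => c • x) 0 = c • (1 : X →L[ℂ] X) := by
    have : (fun x : X => c • x) = ⇑(c • (1 : X →L[ℂ] X)) := by
      ext x; simp
    rw [this, ContinuousLinearMap.fderiv]
  have hlhs : fderiv ℂ (fun x => Φ x - (α : ℂ) • h (Φ x)) 0
      = A - (α : ℂ) • (H.comp A) := by
    rw [fderiv_fun_sub dΦ (dhΦ.fun_const_smul _)]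
    congr 1
    rw [fderiv_fun_const_smul dhΦ]
    congr 1
    have := fderiv_comp (𝕜 := ℂ) 0 (by rw [hΦ0]; exact dh) dΦ
    simp only [Function.comp_def] at this
    rw [this, hΦ0]
  have key : ((1 : X →L[ℂ] X) - (α : ℂ) • H) * A = c • 1 := by
    have : A - (α : ℂ) • (H.comp A) = c • 1 := by
      rw [← hlhs, hfd, hrhs]
    calc ((1 : X →L[ℂ] X) - (α : ℂ) • H) * A
        = A - (α : ℂ) • (H.comp A) := by
          rw [sub_mul, one_mul, smul_mul_assoc]; rfl
      _ = c • 1 := this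
  -- invertibility of 1 - α • H
  have hαc : (α : ℂ) ≠ 0 := by exact_mod_cast hα
  have hw : IsUnit (((α : ℂ)⁻¹) • (1 : X →L[ℂ] X) - H) := by
    rw [spectrum.notMem_iff] at hspec
    rwa [Algebra.algebraMap_eq_smul_one] at hspec
  set w := hw.unit with hwdef
  have hwval : (w : X →L[ℂ] X) = ((α : ℂ)⁻¹) • (1 : X →L[ℂ] X) - H := rfl
  have hscal : (1 : X →L[ℂ] X) - (α : ℂ) • H = (α : ℂ) • (w : X →L[ℂ] X) := by
    rw [hwval, smul_sub, smul_smul, mul_inv_cancel₀ hαc, one_smul]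
  have hu : IsUnit ((1 : X →L[ℂ] X) - (α : ℂ) • H) := by
    rw [hscal]
    have h1 : IsUnit ((α : ℂ) • (1 : X →L[ℂ] X)) := by
      rw [← Algebra.algebraMap_eq_smul_one]
      exact (isUnit_iff_ne_zero.mpr hαc).map (algebraMap ℂ (X →L[ℂ] X))
    have h2 : (α : ℂ) • (w : X →L[ℂ] X) = ((α : ℂ) • (1 : X →L[ℂ] X)) * w := by
      rw [smul_mul_assoc, one_mul]
    rw [h2]
    exact h1.mul w.isUnit
  set u := hu.unit with hudef
  have huval : (u : X →L[ℂ] X) = (1 : X →L[ℂ] X) - (α : ℂ) • H := rfl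
  -- commutation of H with u and u⁻¹
  have hcomm : Commute H (u : X →L[ℂ] X) := by
    rw [huval]
    exact (Commute.one_right H).sub_right ((Commute.refl H).smul_right _)
  have hcomm' : Commute H ((↑u⁻¹ : X →L[ℂ] X)) := hcomm.units_inv_right
  -- A = c • u⁻¹
  have hAeq : A = c • (↑u⁻¹ : X →L[ℂ] X) := by
    have : (↑u⁻¹ : X →L[ℂ] X) * ((u : X →L[ℂ] X) * A) = (↑u⁻¹ : X →L[ℂ] X) * (c • 1) := by
      rw [huval, key]
    rwa [← mul_assoc, u.inv_mul, one_mul, mul_smul_comm, mul_one] at this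
  -- the factorizations
  set T : X →L[ℂ] X := (ω : ℂ) • (1 : X →L[ℂ] X) - H with hT
  have hdiff : (u : X →L[ℂ] X) - c • 1 = (α : ℂ) • T := by
    rw [huval, hT, hc]
    push_cast
    ext x
    simp only [ContinuousLinearMap.sub_apply, ContinuousLinearMap.smul_apply,
      ContinuousLinearMap.one_apply, ContinuousLinearMap.coe_smul', Pi.smul_apply]
    module
  have fact1 : (1 : X →L[ℂ] X) - A = (↑u⁻¹ : X →L[ℂ] X) * ((α : ℂ) • T) := by
    rw [← hdiff, mul_sub, u.inv_mul, mul_smul_comm, mul_one, hAeq]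
  have fact2 : (1 : X →L[ℂ] X) - A = ((α : ℂ) • T) * (↑u⁻¹ : X →L[ℂ] X) := by
    rw [← hdiff, sub_mul, u.mul_inv, smul_mul_assoc, one_mul, hAeq]
  have hid : ContinuousLinearMap.id ℂ X = (1 : X →L[ℂ] X) := rfl

  constructor
  · -- kernels
    rw [hid, show (ω : ℂ) • (1 : X →L[ℂ] X) - H = T from hT.symm]
    ext x
    simp only [LinearMap.mem_ker, ContinuousLinearMap.coe_coe]
    have hinj : ∀ y : X, (↑u⁻¹ : X →L[ℂ] X) y = 0 → y = 0 := by
      intro y hy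
      have := congrArg (↑u : X →L[ℂ] X) hy
      rwa [← ContinuousLinearMap.mul_apply, u.mul_inv, ContinuousLinearMap.one_apply,
        map_zero] at this
    constructor
    · intro hx
      have h1 : ((1 : X →L[ℂ] X) - A) x = 0 := hx
      rw [fact1] at h1
      have hx' : (↑u⁻¹ : X →L[ℂ] X) ((α : ℂ) • T x) = 0 := by
        simpa [ContinuousLinearMap.mul_apply] using h1
      have h2 : (α : ℂ) • T x = 0 := hinj _ hx'
      exact (smul_eq_zero.mp h2).resolve_left hαc
    · intro hx
      show ((1 : X →L[ℂ] X) - A) x = 0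
      rw [fact1]
      simp [ContinuousLinearMap.mul_apply, hx]
  · -- ranges
    rw [hid, show (ω : ℂ) • (1 : X →L[ℂ] X) - H = T from hT.symm]
    ext y
    simp only [LinearMap.mem_range, ContinuousLinearMap.coe_coe]
    constructor
    · rintro ⟨x, hx⟩
      refine ⟨(α : ℂ) • (↑u⁻¹ : X →L[ℂ] X) x, ?_⟩
      rw [← hx, fact2]
      simp only [ContinuousLinearMap.mul_apply, ContinuousLinearMap.smul_apply, map_smul]
    · rintro ⟨z, hz⟩
      refine ⟨(u : X →L[ℂ] X) ((α : ℂ)⁻¹ • z), ?_⟩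
      rw [fact2]
      simp only [ContinuousLinearMap.mul_apply, ContinuousLinearMap.smul_apply]
      have huu : (↑u⁻¹ : X →L[ℂ] X) ((u : X →L[ℂ] X) ((α : ℂ)⁻¹ • z)) = (α : ℂ)⁻¹ • z := by
        rw [← ContinuousLinearMap.mul_apply, u.inv_mul, ContinuousLinearMap.one_apply]
      rw [huu, map_smul, smul_smul, mul_inv_cancel₀ hαc, one_smul, hz]

end
end
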